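/- For every complex w with −γ < Im w < 0, the products P(w) and P(w + iγ) converge and are nonzero, and the functional equation ( e^{i(π/2 + w)}/P(w) ) · ( e^{i(π/2 + w + iγ)}/P(w + iγ) ) = sin(w)/sin(w + iγ) holds. Equivalently, the dressed phase satisfies exp( φ(x₁, x₂) + φ(x₁ + iγ, x₂) ) = sin(x₁ − x₂)/sin(x₁ − x₂ + iγ), where w = x₁ − x₂ and e^{φ(x,z)} is defined through e^{−φ(x,z)} = e^{−i(π/2 + x − z)}·P(x − z). -/

import Mathlib

/-- The `k`-th factor (`k = 1, 2, …` encoded as `k : ℕ` with value `k+1`) of the infinite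
product `P(w)` appearing in the product representation of the dressed phase. -/
noncomputable def phaseProdTerm (γ : ℝ) (w : ℂ) (k : ℕ) : ℂ :=
  ((1 - Complex.exp (-2 * ((2 * (k : ℂ) + 1) * (γ : ℂ) - Complex.I * w))) *
   (1 - Complex.exp (-2 * ((2 * (k : ℂ) + 2) * (γ : ℂ) + Complex.I * w)))) /
  ((1 - Complex.exp (-2 * ((2 * (k : ℂ) + 1) * (γ : ℂ) + Complex.I * w))) *
   (1 - Complex.exp (-2 * ((2 * (k : ℂ) + 2) * (γ : ℂ) - Complex.I * w))))

namespace DressedPhaseAux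

open Complex Filter Finset

/-- `exp(-2(tγ + iw))`. -/
noncomputable def ep (γ : ℝ) (w : ℂ) (t : ℝ) : ℂ :=
  Complex.exp (-2 * ((t : ℂ) * (γ : ℂ) + Complex.I * w))

/-- `exp(-2(tγ - iw))`. -/
noncomputable def em (γ : ℝ) (w : ℂ) (t : ℝ) : ℂ :=
  Complex.exp (-2 * ((t : ℂ) * (γ : ℂ) - Complex.I * w))

lemma norm_ep (γ : ℝ) (w : ℂ) (t : ℝ) :
    ‖ep γ w t‖ = Real.exp (-(2 * t * γ) + 2 * w.im) := by
  rw [ep, Complex.norm_exp]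
  congr 1
  simp [Complex.mul_re, Complex.mul_im]
  ring

lemma norm_em (γ : ℝ) (w : ℂ) (t : ℝ) :
    ‖em γ w t‖ = Real.exp (-(2 * t * γ) - 2 * w.im) := by
  rw [em, Complex.norm_exp]
  congr 1
  simp [Complex.mul_re, Complex.mul_im]
  ring

lemma one_sub_ne {z : ℂ} (h : ‖z‖ < 1) : 1 - z ≠ 0 := by
  intro h0
  rw [sub_eq_zero] at h0
  rw [← h0] at h
  simp at h

lemma term_eq (γ : ℝ) (w : ℂ) (k : ℕ) :
    phaseProdTerm γ w k =
      ((1 - em γ w (2 * k + 1)) * (1 - ep γ w (2 * k + 2))) /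
      ((1 - ep γ w (2 * k + 1)) * (1 - em γ w (2 * k + 2))) := by
  simp only [phaseProdTerm, ep, em]
  push_cast
  ring_nf

lemma term_shift (γ : ℝ) (w : ℂ) (k : ℕ) :
    phaseProdTerm γ (w + Complex.I * (γ : ℂ)) k =
      ((1 - em γ w (2 * k + 2)) * (1 - ep γ w (2 * k + 1))) /
      ((1 - ep γ w (2 * k)) * (1 - em γ w (2 * k + 3))) := by
  simp only [phaseProdTerm, ep, em]
  rw [show (-2 * ((2 * (k : ℂ) + 1) * (γ : ℂ) - Complex.I * (w + Complex.I * (γ : ℂ))))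
      = -2 * ((((2 * (k : ℝ) + 2) : ℝ) : ℂ) * (γ : ℂ) - Complex.I * w) by
        push_cast; linear_combination (2*(γ:ℂ)) * Complex.I_mul_I]
  rw [show (-2 * ((2 * (k : ℂ) + 2) * (γ : ℂ) + Complex.I * (w + Complex.I * (γ : ℂ))))
      = -2 * ((((2 * (k : ℝ) + 1) : ℝ) : ℂ) * (γ : ℂ) + Complex.I * w) by
        push_cast; linear_combination (-2*(γ:ℂ)) * Complex.I_mul_I]
  rw [show (-2 * ((2 * (k : ℂ) + 1) * (γ : ℂ) + Complex.I * (w + Complex.I * (γ : ℂ))))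
      = -2 * ((((2 * (k : ℝ)) : ℝ) : ℂ) * (γ : ℂ) + Complex.I * w) by
        push_cast; linear_combination (-2*(γ:ℂ)) * Complex.I_mul_I]
  rw [show (-2 * ((2 * (k : ℂ) + 2) * (γ : ℂ) - Complex.I * (w + Complex.I * (γ : ℂ))))
      = -2 * ((((2 * (k : ℝ) + 3) : ℝ) : ℂ) * (γ : ℂ) - Complex.I * w) by
        push_cast; linear_combination (2*(γ:ℂ)) * Complex.I_mul_I]

lemma quot_bound {a b c d : ℂ} {t s : ℝ} (ht1 : t ≤ 1)
    (ha : ‖a‖ ≤ t) (hb : ‖b‖ ≤ t) (hc : ‖c‖ ≤ t) (hd : ‖d‖ ≤ t)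
    (hcs : ‖c‖ ≤ s) (hds : ‖d‖ ≤ s) (hs : s < 1) :
    ‖(1 - a) * (1 - b) / ((1 - c) * (1 - d)) - 1‖ ≤ 6 * t / ((1 - s) * (1 - s)) := by
  have h0t : 0 ≤ t := le_trans (norm_nonneg a) ha
  have hc1 : 1 - s ≤ ‖1 - c‖ := by
    have := norm_sub_norm_le (1 : ℂ) c
    rw [norm_one] at this
    linarith
  have hd1 : 1 - s ≤ ‖1 - d‖ := by
    have := norm_sub_norm_le (1 : ℂ) d
    rw [norm_one] at this
    linarith
  have hspos : 0 < 1 - s := by linarith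
  have hD : (1 - s) * (1 - s) ≤ ‖(1 - c) * (1 - d)‖ := by
    rw [norm_mul]
    exact mul_le_mul hc1 hd1 hspos.le (norm_nonneg _)
  have hDpos : 0 < ‖(1 - c) * (1 - d)‖ := lt_of_lt_of_le (by positivity) hD
  have hDne : (1 - c) * (1 - d) ≠ 0 := by
    intro h
    rw [h, norm_zero] at hDpos
    exact lt_irrefl _ hDpos
  rw [div_sub_one hDne, norm_div]
  have hnum : ‖(1 - a) * (1 - b) - (1 - c) * (1 - d)‖ ≤ 6 * t := by
    have expand : (1 - a) * (1 - b) - (1 - c) * (1 - d) = (c - a) + (d - b) + (a * b - c * d) := by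
      ring
    rw [expand]
    have h1 : ‖(c - a) + (d - b) + (a * b - c * d)‖ ≤ ‖c - a‖ + ‖d - b‖ + ‖a * b - c * d‖ :=
      le_trans (norm_add_le _ _) (by gcongr; exact norm_add_le _ _)
    have h2 : ‖c - a‖ ≤ 2 * t := le_trans (norm_sub_le _ _) (by linarith)
    have h3 : ‖d - b‖ ≤ 2 * t := le_trans (norm_sub_le _ _) (by linarith)
    have h4 : ‖a * b - c * d‖ ≤ 2 * t := by
      have := norm_sub_le (a * b) (c * d)
      rw [norm_mul, norm_mul] at this
      nlinarith [norm_nonneg a, norm_nonneg b, norm_nonneg c, norm_nonneg d]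
    linarith
  calc ‖(1 - a) * (1 - b) - (1 - c) * (1 - d)‖ / ‖(1 - c) * (1 - d)‖
      ≤ 6 * t / ((1 - s) * (1 - s)) :=
        div_le_div₀ (by positivity) hnum (by positivity) hD

lemma multipliable_aux {f : ℕ → ℂ} (h0 : ∀ k, f k ≠ 0)
    (h : Summable fun k => ‖f k - 1‖) : Multipliable f := by
  have htend : Tendsto (fun k => ‖f k - 1‖) atTop (nhds 0) := h.tendsto_atTop_zero
  have hev : ∀ᶠ k in atTop, ‖f k - 1‖ < 1 / 2 :=
    htend.eventually_lt_const (by norm_num)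
  obtain ⟨K, hK⟩ := eventually_atTop.mp hev
  have hsum : Summable fun k => Complex.log (f k) := by
    rw [← summable_nat_add_iff K]
    apply Summable.of_norm_bounded (g := fun k => 3 / 2 * ‖f (k + K) - 1‖)
      (((summable_nat_add_iff K).mpr h).mul_left (3 / 2))
    intro k
    have h12 : ‖f (k + K) - 1‖ ≤ 1 / 2 := (hK (k + K) (Nat.le_add_left K k)).le
    have := Complex.norm_log_one_add_half_le_self h12
    rwa [add_sub_cancel] at this
  exact Complex.multipliable_of_summable_log hsum

lemma frac_id {N1 N2 D1 D2 E F : ℂ} (hD1 : D1 ≠ 0) (hD2 : D2 ≠ 0) (hN2 : N2 ≠ 0)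
    (hE : E ≠ 0) (hF : F ≠ 0) :
    (N1 * N2) / (D1 * D2) * ((D2 * D1) / (E * F)) = (N1 / E) / (F / N2) := by
  field_simp

lemma telescope {g : ℕ → ℂ} (h : ∀ n, g n ≠ 0) :
    ∀ n, ∏ i ∈ Finset.range n, (g i / g (i + 1)) = g 0 / g n := by
  intro n
  induction n with
  | zero => simp [div_self (h 0)]
  | succ n ih =>
      rw [Finset.prod_range_succ, ih, div_mul_div_comm, mul_comm (g 0) (g n),
        mul_div_mul_left _ _ (h n)]

end DressedPhaseAux

set_option maxHeartbeats 2000000 in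
open DressedPhaseAux Complex Filter Finset in
/-- For `−γ < Im w < 0` the products `P(w)` and `P(w + iγ)` converge and are nonzero, and
`(e^{i(π/2 + w)}/P(w))·(e^{i(π/2 + w + iγ)}/P(w + iγ)) = sin(w)/sin(w + iγ)`, i.e. the
dressed phase satisfies `exp(φ(x₁,x₂) + φ(x₁+iγ,x₂)) = sin(x₁−x₂)/sin(x₁−x₂+iγ)`. -/
theorem dressedPhase_functional_equation (γ : ℝ) (hγ : 0 < γ)
    (w : ℂ) (h1 : -γ < w.im) (h2 : w.im < 0) :
    Multipliable (phaseProdTerm γ w) ∧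
    Multipliable (phaseProdTerm γ (w + Complex.I * (γ : ℂ))) ∧
    (∏' k : ℕ, phaseProdTerm γ w k) ≠ 0 ∧
    (∏' k : ℕ, phaseProdTerm γ (w + Complex.I * (γ : ℂ)) k) ≠ 0 ∧
    (Complex.exp (Complex.I * ((Real.pi / 2 : ℝ) + w)) / ∏' k : ℕ, phaseProdTerm γ w k) *
      (Complex.exp (Complex.I * ((Real.pi / 2 : ℝ) + w + Complex.I * (γ : ℂ))) /
        ∏' k : ℕ, phaseProdTerm γ (w + Complex.I * (γ : ℂ)) k) =
      Complex.sin w / Complex.sin (w + Complex.I * (γ : ℂ)) := by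
  have hwim : -w.im < γ := by linarith
  -- geometric ratio
  set r : ℝ := Real.exp (-(4 * γ)) with hr_def
  have hr0 : 0 ≤ r := (Real.exp_pos _).le
  have hr1 : r < 1 := by
    have h := Real.exp_lt_exp.mpr (show -(4 * γ) < 0 by linarith)
    rw [Real.exp_zero] at h
    exact h
  have hrk : ∀ k : ℕ, r ^ k = Real.exp (-(4 * (k : ℝ) * γ)) := by
    intro k
    rw [← Real.exp_nat_mul]
    congr 1
    ring
  have hrk1 : ∀ k : ℕ, r ^ k ≤ 1 := fun k => pow_le_one₀ hr0 hr1.le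
  have hkc : ∀ k : ℕ, (0 : ℝ) ≤ (k : ℝ) := fun k => Nat.cast_nonneg k
  -- norm bounds
  have hep_le : ∀ (k : ℕ) (t : ℝ), 2 * (k : ℝ) ≤ t → ‖ep γ w t‖ ≤ r ^ k := by
    intro k t ht
    rw [norm_ep, hrk]
    apply Real.exp_le_exp.mpr
    have hh := mul_nonneg (show (0:ℝ) ≤ t - 2 * (k:ℝ) by linarith) hγ.le
    nlinarith [hh, h2]
  have hem_le : ∀ (k : ℕ) (t : ℝ), 2 * (k : ℝ) + 1 ≤ t → ‖em γ w t‖ ≤ r ^ k := by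
    intro k t ht
    rw [norm_em, hrk]
    apply Real.exp_le_exp.mpr
    have hh := mul_nonneg (show (0:ℝ) ≤ t - (2 * (k:ℝ) + 1) by linarith) hγ.le
    nlinarith [hh, hwim, hγ]
  have hep_lt1 : ∀ t : ℝ, 0 ≤ t → ‖ep γ w t‖ < 1 := by
    intro t ht
    rw [norm_ep, ← Real.exp_zero]
    apply Real.exp_lt_exp.mpr
    have hh := mul_nonneg ht hγ.le
    nlinarith [hh, h2]
  have hem_lt1 : ∀ t : ℝ, 1 ≤ t → ‖em γ w t‖ < 1 := by
    intro t ht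
    rw [norm_em, ← Real.exp_zero]
    apply Real.exp_lt_exp.mpr
    have hh := mul_nonneg (show (0:ℝ) ≤ t - 1 by linarith) hγ.le
    nlinarith [hh, hwim, hγ]
  have hne_ep : ∀ t : ℝ, 0 ≤ t → (1 : ℂ) - ep γ w t ≠ 0 :=
    fun t ht => one_sub_ne (hep_lt1 t ht)
  have hne_em : ∀ t : ℝ, 1 ≤ t → (1 : ℂ) - em γ w t ≠ 0 :=
    fun t ht => one_sub_ne (hem_lt1 t ht)
  -- uniform bounds for the denominators
  set s : ℝ := Real.exp (-(2 * γ)) ⊔ Real.exp (2 * w.im) with hs_def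
  have hs1 : s < 1 := by
    apply max_lt
    · have h := Real.exp_lt_exp.mpr (show -(2 * γ) < 0 by linarith)
      rwa [Real.exp_zero] at h
    · have h := Real.exp_lt_exp.mpr (show 2 * w.im < 0 by linarith)
      rwa [Real.exp_zero] at h
  have hep_s : ∀ t : ℝ, 0 ≤ t → ‖ep γ w t‖ ≤ s := by
    intro t ht
    rw [norm_ep]
    refine le_trans ?_ (le_max_right _ _)
    apply Real.exp_le_exp.mpr
    have hh := mul_nonneg ht hγ.le
    nlinarith [hh]
  have hem_s : ∀ t : ℝ, 2 ≤ t → ‖em γ w t‖ ≤ s := by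
    intro t ht
    rw [norm_em]
    refine le_trans ?_ (le_max_left _ _)
    apply Real.exp_le_exp.mpr
    have hh := mul_nonneg (show (0:ℝ) ≤ t - 2 by linarith) hγ.le
    nlinarith [hh, hwim, hγ]
  -- nonvanishing of the factors
  have hterm_ne : ∀ k : ℕ, phaseProdTerm γ w k ≠ 0 := by
    intro k
    rw [term_eq]
    exact div_ne_zero
      (mul_ne_zero (hne_em _ (by linarith [hkc k])) (hne_ep _ (by linarith [hkc k])))
      (mul_ne_zero (hne_ep _ (by linarith [hkc k])) (hne_em _ (by linarith [hkc k])))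
  have hterm_ne' : ∀ k : ℕ, phaseProdTerm γ (w + Complex.I * (γ : ℂ)) k ≠ 0 := by
    intro k
    rw [term_shift]
    exact div_ne_zero
      (mul_ne_zero (hne_em _ (by linarith [hkc k])) (hne_ep _ (by linarith [hkc k])))
      (mul_ne_zero (hne_ep _ (by linarith [hkc k])) (hne_em _ (by linarith [hkc k])))
  -- summability of the deviations from 1
  have hsummable_geo : Summable fun k : ℕ => 6 / ((1 - s) * (1 - s)) * r ^ k :=
    (summable_geometric_of_lt_one hr0 hr1).mul_left _
  have hbound : ∀ k : ℕ, ‖phaseProdTerm γ w k - 1‖ ≤ 6 / ((1 - s) * (1 - s)) * r ^ k := by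
    intro k
    rw [term_eq]
    refine le_of_le_of_eq (quot_bound (hrk1 k)
      (hem_le k _ (by push_cast; linarith [hkc k]))
      (hep_le k _ (by push_cast; linarith [hkc k]))
      (hep_le k _ (by push_cast; linarith [hkc k]))
      (hem_le k _ (by push_cast; linarith [hkc k]))
      (hep_s _ (by linarith [hkc k]))
      (hem_s _ (by linarith [hkc k])) hs1) (by ring)
  have hbound' : ∀ k : ℕ,
      ‖phaseProdTerm γ (w + Complex.I * (γ : ℂ)) k - 1‖ ≤ 6 / ((1 - s) * (1 - s)) * r ^ k := by
    intro k
    rw [term_shift]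
    refine le_of_le_of_eq (quot_bound (hrk1 k)
      (hem_le k _ (by push_cast; linarith [hkc k]))
      (hep_le k _ (by push_cast; linarith [hkc k]))
      (hep_le k _ (by push_cast; linarith [hkc k]))
      (hem_le k _ (by push_cast; linarith [hkc k]))
      (hep_s _ (by linarith [hkc k]))
      (hem_s _ (by linarith [hkc k])) hs1) (by ring)
  have hsum1 : Summable fun k => ‖phaseProdTerm γ w k - 1‖ :=
    Summable.of_nonneg_of_le (fun k => norm_nonneg _) hbound hsummable_geo
  have hsum2 : Summable fun k => ‖phaseProdTerm γ (w + Complex.I * (γ : ℂ)) k - 1‖ :=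
    Summable.of_nonneg_of_le (fun k => norm_nonneg _) hbound' hsummable_geo
  have M1 : Multipliable (phaseProdTerm γ w) := multipliable_aux hterm_ne hsum1
  have M2 : Multipliable (phaseProdTerm γ (w + Complex.I * (γ : ℂ))) :=
    multipliable_aux hterm_ne' hsum2
  -- the telescoping quotient
  set G : ℕ → ℂ := fun n => (1 - em γ w (2 * (n : ℝ) + 1)) / (1 - ep γ w (2 * (n : ℝ))) with hG_def
  have hGne : ∀ n, G n ≠ 0 := by
    intro n
    exact div_ne_zero (hne_em _ (by linarith [hkc n])) (hne_ep _ (by linarith [hkc n]))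
  have hTk : ∀ k : ℕ, phaseProdTerm γ w k * phaseProdTerm γ (w + Complex.I * (γ : ℂ)) k
      = G k / G (k + 1) := by
    intro k
    rw [term_eq, term_shift]
    simp only [hG_def]
    rw [show (2 * (((k + 1 : ℕ)) : ℝ) + 1) = 2 * (k : ℝ) + 3 by push_cast; ring,
      show (2 * (((k + 1 : ℕ)) : ℝ)) = 2 * (k : ℝ) + 2 by push_cast; ring]
    exact frac_id (hne_ep (2 * (k:ℝ) + 1) (by linarith [hkc k]))
      (hne_em (2 * (k:ℝ) + 2) (by linarith [hkc k]))
      (hne_ep (2 * (k:ℝ) + 2) (by linarith [hkc k]))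
      (hne_ep (2 * (k:ℝ)) (by linarith [hkc k]))
      (hne_em (2 * (k:ℝ) + 3) (by linarith [hkc k]))
  -- limit of G
  have hGlim : Tendsto G atTop (nhds 1) := by
    have hem_lim : Tendsto (fun n : ℕ => em γ w (2 * (n : ℝ) + 1)) atTop (nhds 0) := by
      apply squeeze_zero_norm (fun n => hem_le n _ (le_refl _))
      exact tendsto_pow_atTop_nhds_zero_of_lt_one hr0 hr1
    have hep_lim : Tendsto (fun n : ℕ => ep γ w (2 * (n : ℝ))) atTop (nhds 0) := by
      apply squeeze_zero_norm (fun n => hep_le n _ (le_refl _))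
      exact tendsto_pow_atTop_nhds_zero_of_lt_one hr0 hr1
    have h1' : Tendsto (fun n : ℕ => (1 : ℂ) - em γ w (2 * (n : ℝ) + 1)) atTop (nhds 1) := by
      have := Tendsto.sub (tendsto_const_nhds : Tendsto (fun _ : ℕ => (1:ℂ)) atTop (nhds 1)) hem_lim
      simpa using this
    have h2' : Tendsto (fun n : ℕ => (1 : ℂ) - ep γ w (2 * (n : ℝ))) atTop (nhds 1) := by
      have := Tendsto.sub (tendsto_const_nhds : Tendsto (fun _ : ℕ => (1:ℂ)) atTop (nhds 1)) hep_lim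
      simpa using this
    have := h1'.div h2' one_ne_zero
    simpa only [div_one, Pi.div_def] using this
  -- value of the combined product
  have key : Tendsto (fun n => ∏ i ∈ Finset.range n,
      (phaseProdTerm γ w i * phaseProdTerm γ (w + Complex.I * (γ : ℂ)) i)) atTop (nhds (G 0)) := by
    have heq : (fun n => ∏ i ∈ Finset.range n,
        (phaseProdTerm γ w i * phaseProdTerm γ (w + Complex.I * (γ : ℂ)) i))
        = fun n => G 0 / G n := by
      funext n
      rw [Finset.prod_congr rfl (fun i _ => hTk i), telescope hGne n]
    rw [heq]
    have := Tendsto.div (tendsto_const_nhds : Tendsto (fun _ : ℕ => G 0) atTop (nhds (G 0))) hGlim one_ne_zero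
    simpa only [div_one, Pi.div_def] using this
  have e_prod : (∏' k : ℕ, (phaseProdTerm γ w k * phaseProdTerm γ (w + Complex.I * (γ : ℂ)) k))
      = G 0 := tendsto_nhds_unique (M1.mul M2).hasProd.tendsto_prod_nat key
  have hPP : (∏' k : ℕ, phaseProdTerm γ w k) *
      (∏' k : ℕ, phaseProdTerm γ (w + Complex.I * (γ : ℂ)) k) = G 0 := by
    rw [← M1.tprod_mul M2]
    exact e_prod
  have hG0ne : G 0 ≠ 0 := hGne 0
  have hP1ne : (∏' k : ℕ, phaseProdTerm γ w k) ≠ 0 :=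
    left_ne_zero_of_mul (hPP ▸ hG0ne)
  have hP2ne : (∏' k : ℕ, phaseProdTerm γ (w + Complex.I * (γ : ℂ)) k) ≠ 0 :=
    right_ne_zero_of_mul (hPP ▸ hG0ne)
  refine ⟨M1, M2, hP1ne, hP2ne, ?_⟩
  -- final identity
  rw [div_mul_div_comm, hPP]
  set p : ℂ := Complex.exp (Complex.I * w) with hp_def
  set q : ℂ := Complex.exp ((γ : ℂ)) with hq_def
  have hp : p ≠ 0 := Complex.exp_ne_zero _
  have hq : q ≠ 0 := Complex.exp_ne_zero _
  have hexpI : Complex.exp ((Real.pi / 2 : ℝ) * Complex.I) = Complex.I := by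
    rw [Complex.exp_mul_I]
    push_cast
    rw [Complex.cos_pi_div_two, Complex.sin_pi_div_two]
    ring
  have e1 : Complex.exp (Complex.I * ((Real.pi / 2 : ℝ) + w)) = Complex.I * p := by
    rw [show Complex.I * (((Real.pi / 2 : ℝ) : ℂ) + w)
        = ((Real.pi / 2 : ℝ) : ℂ) * Complex.I + Complex.I * w by ring,
      Complex.exp_add, hexpI]
  have e2 : Complex.exp (Complex.I * ((Real.pi / 2 : ℝ) + w + Complex.I * (γ : ℂ)))
      = Complex.I * p * q⁻¹ := by
    rw [show Complex.I * (((Real.pi / 2 : ℝ) : ℂ) + w + Complex.I * (γ : ℂ))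
        = (((Real.pi / 2 : ℝ) : ℂ) * Complex.I + Complex.I * w) + -((γ : ℂ)) by
          linear_combination (γ:ℂ) * Complex.I_mul_I,
      Complex.exp_add, Complex.exp_add, hexpI, Complex.exp_neg]
  have e3 : ep γ w (2 * ((0 : ℕ) : ℝ)) = (p * p)⁻¹ := by
    rw [ep, show (-2 : ℂ) * ((((2 * ((0 : ℕ) : ℝ)) : ℝ) : ℂ) * (γ : ℂ) + Complex.I * w)
        = -(Complex.I * w + Complex.I * w) by push_cast; ring,
      Complex.exp_neg, Complex.exp_add]
  have e4 : em γ w (2 * ((0 : ℕ) : ℝ) + 1) = p * p * (q * q)⁻¹ := by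
    rw [DressedPhaseAux.em, show (-2 : ℂ) * ((((2 * ((0 : ℕ) : ℝ) + 1) : ℝ) : ℂ) * (γ : ℂ) - Complex.I * w)
        = (Complex.I * w + Complex.I * w) + -((γ : ℂ) + (γ : ℂ)) by push_cast; ring,
      Complex.exp_add, Complex.exp_add, Complex.exp_neg, Complex.exp_add]
  have e5 : Complex.sin w = (p⁻¹ - p) * Complex.I / 2 := by
    rw [Complex.sin, show -w * Complex.I = -(Complex.I * w) by ring,
      show w * Complex.I = Complex.I * w by ring, Complex.exp_neg]
  have e6 : Complex.sin (w + Complex.I * (γ : ℂ)) = (q * p⁻¹ - p * q⁻¹) * Complex.I / 2 := by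
    rw [Complex.sin]
    rw [show -(w + Complex.I * (γ : ℂ)) * Complex.I = (γ : ℂ) + -(Complex.I * w) by
        linear_combination -(γ:ℂ) * Complex.I_mul_I,
      show (w + Complex.I * (γ : ℂ)) * Complex.I = Complex.I * w + -((γ : ℂ)) by
        linear_combination (γ:ℂ) * Complex.I_mul_I,
      Complex.exp_add, Complex.exp_add, Complex.exp_neg, Complex.exp_neg]
  have hG0 : G 0 = (1 - p * p * (q * q)⁻¹) / (1 - (p * p)⁻¹) := by
    rw [hG_def]
    simp only []
    rw [e3, e4]
  have hA : (1 : ℂ) - p * p * (q * q)⁻¹ ≠ 0 := by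
    have := hne_em (2 * ((0 : ℕ) : ℝ) + 1) (by norm_num)
    rwa [e4] at this
  have hE : (1 : ℂ) - (p * p)⁻¹ ≠ 0 := by
    have := hne_ep (2 * ((0 : ℕ) : ℝ)) (by norm_num)
    rwa [e3] at this
  have hqqpp : p * p ≠ q * q := by
    intro h
    apply hA
    rw [h]
    field_simp
    simp
  have hB : q * p⁻¹ - p * q⁻¹ ≠ 0 := by
    intro h
    apply hqqpp
    have h' := sub_eq_zero.mp h
    field_simp at h'
    linear_combination -h'
  have hsin_ratio : Complex.sin w / Complex.sin (w + Complex.I * (γ : ℂ))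
      = (p⁻¹ - p) / (q * p⁻¹ - p * q⁻¹) := by
    rw [e5, e6]
    rw [show (p⁻¹ - p) * Complex.I / 2 = (p⁻¹ - p) * (Complex.I / 2) by ring,
      show (q * p⁻¹ - p * q⁻¹) * Complex.I / 2 = (q * p⁻¹ - p * q⁻¹) * (Complex.I / 2) by ring,
      mul_div_mul_right _ _ (by simp [Complex.I_ne_zero] : Complex.I / 2 ≠ (0 : ℂ))]
  have e12 : Complex.exp (Complex.I * ((Real.pi / 2 : ℝ) + w)) *
      Complex.exp (Complex.I * ((Real.pi / 2 : ℝ) + w + Complex.I * (γ : ℂ)))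
      = -(p * p * q⁻¹) := by
    rw [e1, e2, show Complex.I * p * (Complex.I * p * q⁻¹)
        = (Complex.I * Complex.I) * (p * p * q⁻¹) by ring, Complex.I_mul_I]
    ring
  rw [e12, hG0, hsin_ratio, div_div_eq_mul_div, div_eq_div_iff hA hB]
  field_simp
  ring
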